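/- arXiv:2510.07111 — 2 statements merged into one kernel-verified Lean document; each statement's English description precedes it below -/
import Mathlib

section
/- Let k be a field, let n ≥ 1, and let P and H be polynomials in the variables x_0, …, x_{n-1} over k, regarded via the natural inclusion as elements of A := k[x_0,…,x_n]. Let B := A/(P·x_n + H) be the quotient ring and let p denote the image of P in B. Then the localization of B away from p is isomorphic, as a k-algebra, to the localization of k[x_0,…,x_{n-1}] away from P. -/
set_option maxHeartbeats 4000000
set_option synthInstance.maxHeartbeats 400000
open MvPolynomial


/-- Let `k` be a field, `n ≥ 1`, and `P, H ∈ k[x_0,…,x_{n-1}]`,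
regarded in `A = k[x_0,…,x_n]` via the coordinate inclusion. Let
`B = A/(P·x_n + H)` and let `p` be the image of `P` in `B`. Then the localization
of `B` away from `p` is isomorphic as a `k`-algebra to the localization of
`k[x_0,…,x_{n-1}]` away from `P`. -/
theorem stmt1 (k : Type*) [Field k] (n : ℕ) (hn : 1 ≤ n)
    (P H : MvPolynomial (Fin n) k) :
    Nonempty
      (Localization.Away
          ((Ideal.Quotient.mk
              (Ideal.span
                {MvPolynomial.rename (Fin.castSucc) P * MvPolynomial.X (Fin.last n)
                  + MvPolynomial.rename (Fin.castSucc) H}))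
            (MvPolynomial.rename (Fin.castSucc) P))
        ≃ₐ[k] Localization.Away P) := by
  classical
  let R := MvPolynomial (Fin n) k
  let A := MvPolynomial (Fin (n + 1)) k
  let L := Localization.Away P
  set g : A := rename (Fin.castSucc) P * X (Fin.last n) + rename (Fin.castSucc) H with hg
  set I : Ideal A := Ideal.span {g} with hI
  set p : A ⧸ I := Ideal.Quotient.mk I (rename (Fin.castSucc) P) with hp
  let M := Localization.Away p
  -- the evaluation map A → L
  set f : Fin (n + 1) → L := Fin.lastCases
    (-(algebraMap R L H) * IsLocalization.Away.invSelf P)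
    (fun i => algebraMap R L (X i)) with hf
  have hf_cast : ∀ i : Fin n, f (Fin.castSucc i) = algebraMap R L (X i) := by
    intro i; simp [hf]
  have hf_last : f (Fin.last n) = -(algebraMap R L H) * IsLocalization.Away.invSelf P := by
    simp [hf]
  set φ : A →ₐ[k] L := aeval f with hφ
  have hφ_rename : ∀ q : R, φ (rename (Fin.castSucc) q) = algebraMap R L q := by
    have hc : φ.comp (rename (Fin.castSucc) : R →ₐ[k] A) = IsScalarTower.toAlgHom k R L := by
      apply MvPolynomial.algHom_ext
      intro i
      show φ (rename (Fin.castSucc) (X i)) = _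
      rw [rename_X, hφ, aeval_X, hf_cast]
      rfl
    intro q
    exact AlgHom.congr_fun hc q
  have hφg : φ g = 0 := by
    rw [hg]
    simp only [map_add, map_mul, hφ_rename]
    rw [hφ, aeval_X, hf_last]
    rw [← mul_assoc]
    rw [mul_comm (algebraMap R L P), mul_assoc, IsLocalization.Away.mul_invSelf]
    ring
  -- descend to B
  have hIker : ∀ a ∈ I, φ a = 0 := by
    intro a ha
    rw [hI, Ideal.mem_span_singleton] at ha
    obtain ⟨c, rfl⟩ := ha
    rw [map_mul, hφg, zero_mul]
  set φbar : A ⧸ I →ₐ[k] L := Ideal.Quotient.liftₐ I φ hIker with hφbar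
  have hφbar_mk : ∀ a : A, φbar (Ideal.Quotient.mk I a) = φ a := fun a =>
    Ideal.Quotient.liftₐ_apply I φ hIker _ ▸ Ideal.Quotient.lift_mk I _ _
  have hφbar_p : φbar p = algebraMap R L P := by rw [hp, hφbar_mk, hφ_rename]
  have hunit : IsUnit (φbar.toRingHom p) := by
    show IsUnit (φbar p)
    rw [hφbar_p]
    exact IsLocalization.Away.algebraMap_isUnit P
  set Φ : M →+* L := IsLocalization.Away.lift (S := M) p hunit with hΦ
  have hΦ_eq : ∀ b : A ⧸ I, Φ (algebraMap (A ⧸ I) M b) = φbar b := fun b =>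
    IsLocalization.Away.lift_eq p hunit b
  -- backward map
  set ψ : R →+* M := (algebraMap (A ⧸ I) M).comp
    ((Ideal.Quotient.mk I).comp (rename (Fin.castSucc) : R →ₐ[k] A).toRingHom) with hψ
  have hψ_apply : ∀ q : R, ψ q = algebraMap (A ⧸ I) M
      (Ideal.Quotient.mk I (rename (Fin.castSucc) q)) := fun q => rfl
  have hunitψ : IsUnit (ψ P) := by
    rw [hψ_apply, ← hp]
    exact IsLocalization.Away.algebraMap_isUnit (S := M) p
  set Ψ : L →+* M := IsLocalization.Away.lift (S := L) P (g := ψ) hunitψ with hΨ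
  have hΨ_eq : ∀ q : R, Ψ (algebraMap R L q) = ψ q := fun q =>
    IsLocalization.Away.lift_eq P hunitψ q
  -- Φ ∘ Ψ = id
  have hΦΨ : Φ.comp Ψ = RingHom.id L := by
    apply IsLocalization.ringHom_ext (Submonoid.powers P)
    refine RingHom.ext fun q => ?_
    simp only [RingHom.comp_apply, RingHom.id_apply]
    rw [hΨ_eq, hψ_apply, hΦ_eq, hφbar_mk, hφ_rename]
  -- key relation in M : image of X_last equals -ψ H * (ψ P)⁻¹
  have hrel : ψ P * algebraMap (A ⧸ I) M (Ideal.Quotient.mk I (X (Fin.last n))) + ψ H = 0 := by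
    rw [hψ_apply, hψ_apply, ← map_mul, ← map_add, ← map_mul, ← map_add, ← hg]
    have : (Ideal.Quotient.mk I) g = 0 := by
      rw [Ideal.Quotient.eq_zero_iff_mem, hI]
      exact Ideal.subset_span rfl
    rw [this, map_zero]
  have hΨinv : ψ P * Ψ (IsLocalization.Away.invSelf P) = 1 := by
    rw [← hΨ_eq, ← map_mul, IsLocalization.Away.mul_invSelf, map_one]
  -- Ψ ∘ Φ = id
  have hΨΦ : Ψ.comp Φ = RingHom.id M := by
    have key : (Ψ.comp Φ).comp (algebraMap (A ⧸ I) M) = algebraMap (A ⧸ I) M := by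
      apply Ideal.Quotient.ringHom_ext
      apply MvPolynomial.ringHom_ext
      · intro c
        simp only [RingHom.comp_apply]
        rw [hΦ_eq]
        have : (Ideal.Quotient.mk I) (C c : A) =
            Ideal.Quotient.mk I (rename (Fin.castSucc) (C c : R)) := by rw [rename_C]
        rw [this, hφbar_mk, hφ_rename, hΨ_eq, hψ_apply, rename_C]
      · intro i
        simp only [RingHom.comp_apply]
        rw [hΦ_eq, hφbar_mk]
        refine Fin.lastCases ?_ ?_ i
        · rw [hφ, aeval_X, hf_last, map_mul, map_neg, hΨ_eq]
          have hX := hrel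
          set a := algebraMap (A ⧸ I) M (Ideal.Quotient.mk I (X (Fin.last n))) with ha
          have : a = -(ψ H) * Ψ (IsLocalization.Away.invSelf P) := by
            have h1 : ψ P * a = -ψ H := eq_neg_of_add_eq_zero_left hX
            calc a = a * (ψ P * Ψ (IsLocalization.Away.invSelf P)) := by rw [hΨinv, mul_one]
              _ = (ψ P * a) * Ψ (IsLocalization.Away.invSelf P) := by ring
              _ = -(ψ H) * Ψ (IsLocalization.Away.invSelf P) := by rw [h1]
          rw [← this]
        · intro j
          have : φ (X (Fin.castSucc j) : A) = algebraMap R L (X j) := by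
            rw [hφ, aeval_X, hf_cast]
          rw [this, hΨ_eq, hψ_apply, rename_X]
    exact IsLocalization.ringHom_ext (S := M) (Submonoid.powers p)
      (j := Ψ.comp Φ) (k := RingHom.id M)
      (by rw [key]; exact (RingHom.id_comp _).symm)
  -- build the AlgEquiv
  have hcomm : ∀ c : k, Φ (algebraMap k M c) = algebraMap k L c := by
    intro c
    have h1 : algebraMap k M c = algebraMap (A ⧸ I) M (algebraMap k (A ⧸ I) c) :=
      (IsScalarTower.algebraMap_apply k (A ⧸ I) M c)
    rw [h1, hΦ_eq, ← φbar.commutes c]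
  exact ⟨AlgEquiv.ofRingEquiv (f := RingEquiv.ofRingHom Φ Ψ hΦΨ hΨΦ) hcomm⟩
end

section
/- Let R be a commutative ring and let c, g, M, L, f, t ∈ R. In the polynomial ring R[x, y], set H := g·c + M·x + L·y and F := x·y + t·f, and in R[x] set q := x·g·c + M·x² − t·L·f. Then the localization of R[x, y]/(H, F) away from the image of x is isomorphic, as an R-algebra, to the localization of R[x]/(q) away from the image of x; the isomorphism is the identity on R and on x, and sends the class of y to −t·f·x^{-1}. -/
/-- The ring `R[x,y]/(H, F)` where `H = g·c + M·x + L·y` and `F = x·y + t·f`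
(with `x = X 0`, `y = X 1`). -/
def stmt5.B₁ (R : Type*) [CommRing R] (c g M L f t : R) : Type _ :=
  MvPolynomial (Fin 2) R ⧸
    (Ideal.span
      { MvPolynomial.C (g * c) + MvPolynomial.C M * MvPolynomial.X 0
          + MvPolynomial.C L * MvPolynomial.X 1,
        MvPolynomial.X 0 * MvPolynomial.X 1 + MvPolynomial.C (t * f) } :
      Ideal (MvPolynomial (Fin 2) R))

noncomputable instance (R : Type*) [CommRing R] (c g M L f t : R) :
    CommRing (stmt5.B₁ R c g M L f t) :=
  inferInstanceAs (CommRing (_ ⧸ (_ : Ideal (MvPolynomial (Fin 2) R))))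

noncomputable instance (R : Type*) [CommRing R] (c g M L f t : R) :
    Algebra R (stmt5.B₁ R c g M L f t) :=
  inferInstanceAs (Algebra R (_ ⧸ (_ : Ideal (MvPolynomial (Fin 2) R))))

/-- The class of `x = X 0` in `R[x,y]/(H, F)`. -/
noncomputable def stmt5.x₁ (R : Type*) [CommRing R] (c g M L f t : R) : stmt5.B₁ R c g M L f t :=
  Ideal.Quotient.mk _ (MvPolynomial.X 0)

/-- The class of `y = X 1` in `R[x,y]/(H, F)`. -/
noncomputable def stmt5.y₁ (R : Type*) [CommRing R] (c g M L f t : R) : stmt5.B₁ R c g M L f t :=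
  Ideal.Quotient.mk _ (MvPolynomial.X 1)

/-- The ring `R[x]/(q)` where `q = x·g·c + M·x² − t·L·f`. -/
def stmt5.B₂ (R : Type*) [CommRing R] (c g M L f t : R) : Type _ :=
  Polynomial R ⧸
    (Ideal.span
      { Polynomial.X * Polynomial.C (g * c) + Polynomial.C M * Polynomial.X ^ 2
          - Polynomial.C (t * L * f) } : Ideal (Polynomial R))

noncomputable instance (R : Type*) [CommRing R] (c g M L f t : R) :
    CommRing (stmt5.B₂ R c g M L f t) :=
  inferInstanceAs (CommRing (_ ⧸ (_ : Ideal (Polynomial R))))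

noncomputable instance (R : Type*) [CommRing R] (c g M L f t : R) :
    Algebra R (stmt5.B₂ R c g M L f t) :=
  inferInstanceAs (Algebra R (_ ⧸ (_ : Ideal (Polynomial R))))

/-- The class of `x` in `R[x]/(q)`. -/
noncomputable def stmt5.x₂ (R : Type*) [CommRing R] (c g M L f t : R) : stmt5.B₂ R c g M L f t :=
  Ideal.Quotient.mk _ Polynomial.X

namespace stmt5aux

open MvPolynomial IsLocalization

variable {R : Type*} [CommRing R] (c g M L f t : R)

/-- relation q = 0 in B₂, in algebraMap form -/
lemma hq : stmt5.x₂ R c g M L f t * algebraMap R (stmt5.B₂ R c g M L f t) (g * c)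
    + algebraMap R (stmt5.B₂ R c g M L f t) M * stmt5.x₂ R c g M L f t ^ 2
    - algebraMap R (stmt5.B₂ R c g M L f t) (t * L * f) = 0 := by
  have h0 : (Ideal.Quotient.mk
      (Ideal.span {Polynomial.X * Polynomial.C (g*c) + Polynomial.C M * Polynomial.X ^ 2
        - Polynomial.C (t*L*f)} : Ideal (Polynomial R)))
      (Polynomial.X * Polynomial.C (g*c) + Polynomial.C M * Polynomial.X ^ 2
        - Polynomial.C (t*L*f)) = 0 :=
    Ideal.Quotient.eq_zero_iff_mem.mpr (Ideal.subset_span rfl)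
  exact h0

lemma mkC (I : Ideal (MvPolynomial (Fin 2) R)) (r : R) :
    Ideal.Quotient.mk I (MvPolynomial.C r)
      = algebraMap R (MvPolynomial (Fin 2) R ⧸ I) r := by
  rw [← MvPolynomial.algebraMap_eq, Ideal.Quotient.mk_algebraMap]

lemma mkCp (I : Ideal (Polynomial R)) (r : R) :
    Ideal.Quotient.mk I (Polynomial.C r)
      = algebraMap R (Polynomial R ⧸ I) r := by
  rw [← Polynomial.algebraMap_eq, Ideal.Quotient.mk_algebraMap]

/-- relation x*y = -(t*f) in B₁ -/
lemma hxy : stmt5.x₁ R c g M L f t * stmt5.y₁ R c g M L f t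
    = algebraMap R (stmt5.B₁ R c g M L f t) (-(t * f)) := by
  have h0 : (Ideal.Quotient.mk
      (Ideal.span
      { MvPolynomial.C (g * c) + MvPolynomial.C M * MvPolynomial.X 0
          + MvPolynomial.C L * MvPolynomial.X 1,
        MvPolynomial.X 0 * MvPolynomial.X 1 + MvPolynomial.C (t * f) } :
      Ideal (MvPolynomial (Fin 2) R)))
      (MvPolynomial.X 0 * MvPolynomial.X 1 + MvPolynomial.C (t * f)) = 0 :=
    Ideal.Quotient.eq_zero_iff_mem.mpr
      (Ideal.subset_span (Set.mem_insert_of_mem _ rfl))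
  show Ideal.Quotient.mk _ (MvPolynomial.X 0) * Ideal.Quotient.mk _ (MvPolynomial.X 1)
      = algebraMap R (MvPolynomial (Fin 2) R ⧸
          (Ideal.span
          { MvPolynomial.C (g * c) + MvPolynomial.C M * MvPolynomial.X 0
              + MvPolynomial.C L * MvPolynomial.X 1,
            MvPolynomial.X 0 * MvPolynomial.X 1 + MvPolynomial.C (t * f) } :
          Ideal (MvPolynomial (Fin 2) R))) (-(t * f))
  rw [map_neg, ← mkC]
  exact eq_neg_of_add_eq_zero_left h0

noncomputable def v : Fin 2 → Localization.Away (stmt5.x₂ R c g M L f t) :=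
  ![algebraMap _ _ (stmt5.x₂ R c g M L f t),
    algebraMap (stmt5.B₂ R c g M L f t) _ (algebraMap R _ (-(t * f)))
      * IsLocalization.Away.invSelf (S := Localization.Away (stmt5.x₂ R c g M L f t))
          (stmt5.x₂ R c g M L f t)]

lemma aeval_vanish (a : MvPolynomial (Fin 2) R)
    (ha : a ∈ (Ideal.span
      { MvPolynomial.C (g * c) + MvPolynomial.C M * MvPolynomial.X 0
          + MvPolynomial.C L * MvPolynomial.X 1,
        MvPolynomial.X 0 * MvPolynomial.X 1 + MvPolynomial.C (t * f) } :
      Ideal (MvPolynomial (Fin 2) R))) :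
    MvPolynomial.aeval (v c g M L f t) a = 0 := by
  have hinv := IsLocalization.Away.mul_invSelf
    (S := Localization.Away (stmt5.x₂ R c g M L f t)) (stmt5.x₂ R c g M L f t)
  have hu : IsUnit (algebraMap (stmt5.B₂ R c g M L f t)
      (Localization.Away (stmt5.x₂ R c g M L f t)) (stmt5.x₂ R c g M L f t)) :=
    IsUnit.of_mul_eq_one _ hinv
  have hq2 := congrArg (algebraMap (stmt5.B₂ R c g M L f t)
      (Localization.Away (stmt5.x₂ R c g M L f t))) (hq c g M L f t)
  simp only [map_add, map_sub, map_mul, map_pow, map_zero] at hq2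
  refine (Ideal.span_le.mpr ?_ :
    _ ≤ RingHom.ker (MvPolynomial.aeval (v c g M L f t)).toRingHom) ha
  rintro p hp
  simp only [Set.mem_insert_iff, Set.mem_singleton_iff] at hp
  have tow : ∀ r : R, algebraMap R (Localization.Away (stmt5.x₂ R c g M L f t)) r
      = algebraMap (stmt5.B₂ R c g M L f t) _ (algebraMap R _ r) :=
    fun r => IsScalarTower.algebraMap_apply R _ _ r
  rcases hp with rfl | rfl
  · simp only [SetLike.mem_coe, RingHom.mem_ker, AlgHom.toRingHom_eq_coe, RingHom.coe_coe,
      map_add, map_mul, MvPolynomial.aeval_X, MvPolynomial.aeval_C, v,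
      Matrix.cons_val_zero, Matrix.cons_val_one, Matrix.head_cons, tow, map_neg]
    rw [← hu.mul_right_eq_zero]
    linear_combination hq2 - (algebraMap (stmt5.B₂ R c g M L f t)
        (Localization.Away (stmt5.x₂ R c g M L f t)) (algebraMap R _ L)
      * (algebraMap (stmt5.B₂ R c g M L f t) _ (algebraMap R _ t)
        * algebraMap (stmt5.B₂ R c g M L f t) _ (algebraMap R _ f))) * hinv
  · simp only [SetLike.mem_coe, RingHom.mem_ker, AlgHom.toRingHom_eq_coe, RingHom.coe_coe,
      map_add, map_mul, MvPolynomial.aeval_X, MvPolynomial.aeval_C, v,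
      Matrix.cons_val_zero, Matrix.cons_val_one, Matrix.head_cons, tow, map_neg]
    linear_combination (-(algebraMap (stmt5.B₂ R c g M L f t)
        (Localization.Away (stmt5.x₂ R c g M L f t)) (algebraMap R _ t)
      * algebraMap (stmt5.B₂ R c g M L f t) _ (algebraMap R _ f))) * hinv

noncomputable def ψ : stmt5.B₁ R c g M L f t →ₐ[R] Localization.Away (stmt5.x₂ R c g M L f t) :=
  Ideal.Quotient.liftₐ _ (MvPolynomial.aeval (v c g M L f t)) (aeval_vanish c g M L f t)

lemma ψ_mk (p : MvPolynomial (Fin 2) R) :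
    ψ c g M L f t (Ideal.Quotient.mk _ p) = MvPolynomial.aeval (v c g M L f t) p := by
  unfold ψ
  exact DFunLike.congr_fun (Ideal.Quotient.liftₐ_comp (R₁ := R)
    (Ideal.span
      { MvPolynomial.C (g * c) + MvPolynomial.C M * MvPolynomial.X 0
          + MvPolynomial.C L * MvPolynomial.X 1,
        MvPolynomial.X 0 * MvPolynomial.X 1 + MvPolynomial.C (t * f) })
    (MvPolynomial.aeval (v c g M L f t)) (aeval_vanish c g M L f t)) p

lemma ψ_x : ψ c g M L f t (stmt5.x₁ R c g M L f t)
    = algebraMap _ _ (stmt5.x₂ R c g M L f t) := by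
  rw [stmt5.x₁, ψ_mk]; simp [v]

lemma ψ_y : ψ c g M L f t (stmt5.y₁ R c g M L f t)
    = algebraMap (stmt5.B₂ R c g M L f t) _ (algebraMap R _ (-(t * f)))
      * IsLocalization.Away.invSelf (S := Localization.Away (stmt5.x₂ R c g M L f t))
          (stmt5.x₂ R c g M L f t) := by
  rw [stmt5.y₁, ψ_mk]; simp [v]

/-- relation q(x₁) = 0 in B₁ -/
lemma hq1 : stmt5.x₁ R c g M L f t * algebraMap R (stmt5.B₁ R c g M L f t) (g * c)
    + algebraMap R (stmt5.B₁ R c g M L f t) M * stmt5.x₁ R c g M L f t ^ 2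
    - algebraMap R (stmt5.B₁ R c g M L f t) (t * L * f) = 0 := by
  have hid : MvPolynomial.X 0 * (MvPolynomial.C (g * c) : MvPolynomial (Fin 2) R)
      + MvPolynomial.C M * MvPolynomial.X 0 ^ 2 - MvPolynomial.C (t * L * f)
      = MvPolynomial.X 0 * (MvPolynomial.C (g * c) + MvPolynomial.C M * MvPolynomial.X 0
          + MvPolynomial.C L * MvPolynomial.X 1)
        - MvPolynomial.C L * (MvPolynomial.X 0 * MvPolynomial.X 1
          + MvPolynomial.C (t * f)) := by
    simp only [MvPolynomial.C_mul]
    ring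
  have h0 : (Ideal.Quotient.mk
      (Ideal.span
      { MvPolynomial.C (g * c) + MvPolynomial.C M * MvPolynomial.X 0
          + MvPolynomial.C L * MvPolynomial.X 1,
        MvPolynomial.X 0 * MvPolynomial.X 1 + MvPolynomial.C (t * f) } :
      Ideal (MvPolynomial (Fin 2) R)))
      (MvPolynomial.X 0 * MvPolynomial.C (g * c)
        + MvPolynomial.C M * MvPolynomial.X 0 ^ 2 - MvPolynomial.C (t * L * f)) = 0 := by
    refine Ideal.Quotient.eq_zero_iff_mem.mpr ?_
    rw [hid]
    exact sub_mem (Ideal.mul_mem_left _ _ (Ideal.subset_span (Set.mem_insert _ _)))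
      (Ideal.mul_mem_left _ _ (Ideal.subset_span (Set.mem_insert_of_mem _ rfl)))
  exact h0

lemma q_vanish (a : Polynomial R)
    (ha : a ∈ (Ideal.span
      { Polynomial.X * Polynomial.C (g * c) + Polynomial.C M * Polynomial.X ^ 2
          - Polynomial.C (t * L * f) } : Ideal (Polynomial R))) :
    Polynomial.aeval (stmt5.x₁ R c g M L f t) a = 0 := by
  refine (Ideal.span_le.mpr ?_ :
    _ ≤ RingHom.ker (Polynomial.aeval (stmt5.x₁ R c g M L f t)).toRingHom) ha
  rintro p hp
  simp only [Set.mem_singleton_iff] at hp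
  subst hp
  simp only [SetLike.mem_coe, RingHom.mem_ker, AlgHom.toRingHom_eq_coe, RingHom.coe_coe,
    map_add, map_sub, map_mul, map_pow, Polynomial.aeval_X, Polynomial.aeval_C]
  have h := hq1 c g M L f t
  simp only [map_mul] at h ⊢
  linear_combination h

noncomputable def ω : stmt5.B₂ R c g M L f t →ₐ[R] stmt5.B₁ R c g M L f t :=
  Ideal.Quotient.liftₐ _ (Polynomial.aeval (stmt5.x₁ R c g M L f t)) (q_vanish c g M L f t)

lemma ω_mk (p : Polynomial R) :
    ω c g M L f t (Ideal.Quotient.mk _ p)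
      = Polynomial.aeval (stmt5.x₁ R c g M L f t) p := by
  unfold ω
  exact DFunLike.congr_fun (Ideal.Quotient.liftₐ_comp (R₁ := R)
    (Ideal.span
      { Polynomial.X * Polynomial.C (g * c) + Polynomial.C M * Polynomial.X ^ 2
          - Polynomial.C (t * L * f) })
    (Polynomial.aeval (stmt5.x₁ R c g M L f t)) (q_vanish c g M L f t)) p

lemma ω_x : ω c g M L f t (stmt5.x₂ R c g M L f t) = stmt5.x₁ R c g M L f t := by
  rw [stmt5.x₂, ω_mk]; simp

lemma ψx_isUnit : IsUnit ((ψ c g M L f t).toRingHom (stmt5.x₁ R c g M L f t)) := by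
  have : (ψ c g M L f t).toRingHom (stmt5.x₁ R c g M L f t)
      = algebraMap _ _ (stmt5.x₂ R c g M L f t) := ψ_x c g M L f t
  rw [this]
  exact IsLocalization.Away.algebraMap_isUnit _

noncomputable def F₁ : Localization.Away (stmt5.x₁ R c g M L f t)
    →+* Localization.Away (stmt5.x₂ R c g M L f t) :=
  IsLocalization.Away.lift (stmt5.x₁ R c g M L f t) (ψx_isUnit c g M L f t)

lemma F₁_app (b : stmt5.B₁ R c g M L f t) :
    F₁ c g M L f t (algebraMap _ (Localization.Away (stmt5.x₁ R c g M L f t)) b)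
      = ψ c g M L f t b :=
  IsLocalization.Away.lift_eq _ _ b

noncomputable def ωL : stmt5.B₂ R c g M L f t
    →+* Localization.Away (stmt5.x₁ R c g M L f t) :=
  (algebraMap (stmt5.B₁ R c g M L f t) (Localization.Away (stmt5.x₁ R c g M L f t))).comp
    (ω c g M L f t).toRingHom

lemma ωLx_isUnit : IsUnit (ωL c g M L f t (stmt5.x₂ R c g M L f t)) := by
  have : ωL c g M L f t (stmt5.x₂ R c g M L f t)
      = algebraMap _ _ (stmt5.x₁ R c g M L f t) := by
    rw [ωL, RingHom.comp_apply]
    exact congrArg _ (ω_x c g M L f t)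
  rw [this]
  exact IsLocalization.Away.algebraMap_isUnit _

noncomputable def F₂ : Localization.Away (stmt5.x₂ R c g M L f t)
    →+* Localization.Away (stmt5.x₁ R c g M L f t) :=
  IsLocalization.Away.lift (stmt5.x₂ R c g M L f t) (ωLx_isUnit c g M L f t)

lemma F₂_app (b : stmt5.B₂ R c g M L f t) :
    F₂ c g M L f t (algebraMap _ (Localization.Away (stmt5.x₂ R c g M L f t)) b)
      = algebraMap _ (Localization.Away (stmt5.x₁ R c g M L f t)) (ω c g M L f t b) :=
  IsLocalization.Away.lift_eq _ _ b

lemma F₂_inv : algebraMap _ (Localization.Away (stmt5.x₁ R c g M L f t)) (stmt5.x₁ R c g M L f t)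
    * F₂ c g M L f t (IsLocalization.Away.invSelf
        (S := Localization.Away (stmt5.x₂ R c g M L f t)) (stmt5.x₂ R c g M L f t)) = 1 := by
  have h := congrArg (F₂ c g M L f t) (IsLocalization.Away.mul_invSelf
    (S := Localization.Away (stmt5.x₂ R c g M L f t)) (stmt5.x₂ R c g M L f t))
  rw [map_mul, map_one, F₂_app, ω_x] at h
  exact h

lemma comp₁C (r : R) :
    F₂ c g M L f t ((F₁ c g M L f t)
      (algebraMap (stmt5.B₁ R c g M L f t) (Localization.Away (stmt5.x₁ R c g M L f t))
        (algebraMap R (stmt5.B₁ R c g M L f t) r)))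
    = algebraMap (stmt5.B₁ R c g M L f t) (Localization.Away (stmt5.x₁ R c g M L f t))
        (algebraMap R (stmt5.B₁ R c g M L f t) r) := by
  rw [F₁_app, AlgHom.commutes,
    IsScalarTower.algebraMap_apply R (stmt5.B₂ R c g M L f t)
      (Localization.Away (stmt5.x₂ R c g M L f t)), F₂_app, AlgHom.commutes,
    ← IsScalarTower.algebraMap_apply R (stmt5.B₁ R c g M L f t)
      (Localization.Away (stmt5.x₁ R c g M L f t))]

lemma comp₁x :
    F₂ c g M L f t ((F₁ c g M L f t)
      (algebraMap (stmt5.B₁ R c g M L f t) (Localization.Away (stmt5.x₁ R c g M L f t))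
        (stmt5.x₁ R c g M L f t)))
    = algebraMap (stmt5.B₁ R c g M L f t) (Localization.Away (stmt5.x₁ R c g M L f t))
        (stmt5.x₁ R c g M L f t) := by
  rw [F₁_app, ψ_x, F₂_app, ω_x]

lemma comp₁y :
    F₂ c g M L f t ((F₁ c g M L f t)
      (algebraMap (stmt5.B₁ R c g M L f t) (Localization.Away (stmt5.x₁ R c g M L f t))
        (stmt5.y₁ R c g M L f t)))
    = algebraMap (stmt5.B₁ R c g M L f t) (Localization.Away (stmt5.x₁ R c g M L f t))
        (stmt5.y₁ R c g M L f t) := by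
  rw [F₁_app, ψ_y, map_mul, F₂_app, AlgHom.commutes, ← hxy, map_mul]
  calc algebraMap _ _ (stmt5.x₁ R c g M L f t) * algebraMap _ _ (stmt5.y₁ R c g M L f t)
        * F₂ c g M L f t (IsLocalization.Away.invSelf (stmt5.x₂ R c g M L f t))
      = algebraMap _ _ (stmt5.y₁ R c g M L f t)
        * (algebraMap _ _ (stmt5.x₁ R c g M L f t)
          * F₂ c g M L f t (IsLocalization.Away.invSelf (stmt5.x₂ R c g M L f t))) := by
        ring
    _ = algebraMap _ _ (stmt5.y₁ R c g M L f t) := by rw [F₂_inv, mul_one]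

lemma comp₁ : (F₂ c g M L f t).comp (F₁ c g M L f t)
    = RingHom.id (Localization.Away (stmt5.x₁ R c g M L f t)) := by
  apply IsLocalization.ringHom_ext (Submonoid.powers (stmt5.x₁ R c g M L f t))
  apply Ideal.Quotient.ringHom_ext
  apply MvPolynomial.ringHom_ext
  · intro r
    exact comp₁C c g M L f t r
  · refine Fin.forall_fin_two.mpr ⟨?_, ?_⟩
    · exact comp₁x c g M L f t
    · exact comp₁y c g M L f t

lemma comp₂C (r : R) :
    F₁ c g M L f t ((F₂ c g M L f t)
      (algebraMap (stmt5.B₂ R c g M L f t) (Localization.Away (stmt5.x₂ R c g M L f t))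
        (algebraMap R (stmt5.B₂ R c g M L f t) r)))
    = algebraMap (stmt5.B₂ R c g M L f t) (Localization.Away (stmt5.x₂ R c g M L f t))
        (algebraMap R (stmt5.B₂ R c g M L f t) r) := by
  rw [F₂_app, AlgHom.commutes, F₁_app, AlgHom.commutes,
    IsScalarTower.algebraMap_apply R (stmt5.B₂ R c g M L f t)
      (Localization.Away (stmt5.x₂ R c g M L f t))]

lemma comp₂x :
    F₁ c g M L f t ((F₂ c g M L f t)
      (algebraMap (stmt5.B₂ R c g M L f t) (Localization.Away (stmt5.x₂ R c g M L f t))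
        (stmt5.x₂ R c g M L f t)))
    = algebraMap (stmt5.B₂ R c g M L f t) (Localization.Away (stmt5.x₂ R c g M L f t))
        (stmt5.x₂ R c g M L f t) := by
  rw [F₂_app, ω_x, F₁_app, ψ_x]

lemma comp₂ : (F₁ c g M L f t).comp (F₂ c g M L f t)
    = RingHom.id (Localization.Away (stmt5.x₂ R c g M L f t)) := by
  apply IsLocalization.ringHom_ext (Submonoid.powers (stmt5.x₂ R c g M L f t))
  apply Ideal.Quotient.ringHom_ext
  apply Polynomial.ringHom_ext
  · intro r
    exact comp₂C c g M L f t r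
  · exact comp₂x c g M L f t

end stmt5aux

/-- Let `R` be a commutative ring and `c, g, M, L, f, t ∈ R`.
With `H = g·c + M·x + L·y`, `F = x·y + t·f` in `R[x,y]` and
`q = x·g·c + M·x² − t·L·f` in `R[x]`, the localization of `R[x,y]/(H,F)` away
from the image of `x` is isomorphic as an `R`-algebra to the localization of
`R[x]/(q)` away from the image of `x`; the isomorphism is the identity on `R`
(it is an `R`-algebra map) and on `x`, and sends the class of `y` to
`−t·f·x⁻¹`. -/
theorem stmt5 (R : Type*) [CommRing R] (c g M L f t : R) :
    ∃ e : Localization.Away (stmt5.x₁ R c g M L f t)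
        ≃ₐ[R] Localization.Away (stmt5.x₂ R c g M L f t),
      e (algebraMap _ _ (stmt5.x₁ R c g M L f t))
          = algebraMap _ _ (stmt5.x₂ R c g M L f t) ∧
      e (algebraMap _ _ (stmt5.y₁ R c g M L f t))
          = algebraMap (stmt5.B₂ R c g M L f t) _ (algebraMap R _ (-(t * f)))
            * IsLocalization.Away.invSelf (S := Localization.Away (stmt5.x₂ R c g M L f t))
                (stmt5.x₂ R c g M L f t) := by
  refine ⟨AlgEquiv.ofRingEquiv (f := RingEquiv.ofRingHom (stmt5aux.F₁ c g M L f t)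
    (stmt5aux.F₂ c g M L f t) (stmt5aux.comp₂ c g M L f t) (stmt5aux.comp₁ c g M L f t))
    (fun r => ?_), ?_, ?_⟩
  · show stmt5aux.F₁ c g M L f t (algebraMap R _ r) = algebraMap R _ r
    rw [IsScalarTower.algebraMap_apply R (stmt5.B₁ R c g M L f t), stmt5aux.F₁_app,
      AlgHom.commutes]
  · show stmt5aux.F₁ c g M L f t (algebraMap _ _ (stmt5.x₁ R c g M L f t)) = _
    rw [stmt5aux.F₁_app, stmt5aux.ψ_x]
  · show stmt5aux.F₁ c g M L f t (algebraMap _ _ (stmt5.y₁ R c g M L f t)) = _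
    rw [stmt5aux.F₁_app, stmt5aux.ψ_y]
end
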